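/- Let z_1, ..., z_N be the zeros of the Hermite polynomial H_N and s_{2l} := \sum_{j=1}^N z_j^{2l}. Then for every l \ge 1, s_{2l} = (1/2) \sum_{m=0}^{l-1} s_{2(l-1-m)} s_{2m} - ((2l-1)/2) s_{2(l-1)}, with s_0 = N. -/

import Mathlib

open Polynomial Finset

/-- The physicists' Hermite polynomials, orthogonal w.r.t. the weight `e^{-x^2}`. -/
noncomputable def physHermite : ℕ → Polynomial ℝ
  | 0 => 1
  | 1 => 2 * X
  | n + 2 => 2 * X * physHermite (n + 1) - C (2 * ((n : ℝ) + 1)) * physHermite n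

lemma ph_succ_succ (n : ℕ) : physHermite (n + 2) =
    2 * X * physHermite (n + 1) - C (2 * ((n : ℝ) + 1)) * physHermite n := rfl

lemma deriv_ph : ∀ n, derivative (physHermite (n + 1)) = C (2 * ((n : ℝ) + 1)) * physHermite n := by
  intro n
  induction n using Nat.twoStepInduction with
  | zero => simp [physHermite]; ring_nf; simp [map_ofNat]
  | one =>
    show derivative (physHermite (0+2)) = _
    rw [ph_succ_succ 0]
    simp [physHermite, map_ofNat]
    ring_nf
  | more n ih1 ih2 =>
    rw [ph_succ_succ (n+1)]
    simp only [derivative_sub, derivative_mul, derivative_C, derivative_X, derivative_ofNat, ih1, ih2]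
    rw [ph_succ_succ n]
    simp only [map_add, map_mul, map_one, map_ofNat, Polynomial.C_eq_natCast]
    push_cast
    ring

lemma two_eq_C : (2 : Polynomial ℝ) = C 2 := (map_ofNat C 2).symm

lemma ph_natDegree_le (n : ℕ) : (physHermite n).natDegree ≤ n := by
  induction n using Nat.twoStepInduction with
  | zero => simp [physHermite]
  | one =>
    show (physHermite 1).natDegree ≤ 1
    rw [show physHermite 1 = 2 * X from rfl]
    exact (natDegree_mul_le).trans (by simp)
  | more n ih1 ih2 =>
    rw [ph_succ_succ n]
    refine le_trans (natDegree_sub_le _ _) (max_le ?_ ?_)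
    · refine le_trans natDegree_mul_le ?_
      have h1 : (2 * X : Polynomial ℝ).natDegree ≤ 1 := natDegree_mul_le.trans (by simp)
      omega
    · refine le_trans natDegree_mul_le ?_
      simp only [natDegree_C, zero_add]
      omega

lemma ph_coeff (n : ℕ) : (physHermite n).coeff n = 2 ^ n := by
  induction n using Nat.twoStepInduction with
  | zero => simp [physHermite]
  | one =>
    show (physHermite 1).coeff 1 = 2 ^ 1
    rw [show physHermite 1 = 2 * X from rfl, two_eq_C]
    simp
  | more n ih1 ih2 =>
    rw [ph_succ_succ n, coeff_sub, two_eq_C, mul_assoc, coeff_C_mul, coeff_C_mul,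
      show n + 2 = (n+1)+1 from rfl, coeff_X_mul, ih2,
      coeff_eq_zero_of_natDegree_lt (lt_of_le_of_lt (ph_natDegree_le n) (by omega))]
    ring

lemma ph_ne_zero (n : ℕ) : physHermite n ≠ 0 := fun h => by
  have := ph_coeff n
  rw [h, coeff_zero] at this
  exact absurd this.symm (by positivity)

lemma ph_natDegree (n : ℕ) : (physHermite n).natDegree = n :=
  natDegree_eq_of_le_of_coeff_ne_zero (ph_natDegree_le n) (by rw [ph_coeff]; positivity)

lemma ph_parity (n : ℕ) (x : ℝ) :
    (physHermite n).eval (-x) = (-1) ^ n * (physHermite n).eval x := by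
  induction n using Nat.twoStepInduction with
  | zero => simp [physHermite]
  | one => show (physHermite 1).eval _ = _; rw [show physHermite 1 = 2 * X from rfl]; simp
  | more n ih1 ih2 =>
    rw [ph_succ_succ n]
    simp only [eval_sub, eval_mul, eval_ofNat, eval_X, eval_C, ih1, ih2]
    ring

lemma ph_ode (n : ℕ) : derivative (derivative (physHermite n)) =
    2 * X * derivative (physHermite n) - C (2 * (n : ℝ)) * physHermite n := by
  match n with
  | 0 => simp [physHermite]
  | 1 =>
    rw [show physHermite 1 = 2 * X from rfl]
    simp [derivative_mul]
    rw [map_ofNat C 2]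
    ring
  | (n+2) =>
    rw [deriv_ph (n+1)]
    rw [derivative_C_mul, deriv_ph n]
    rw [ph_succ_succ n]
    push_cast
    ring

lemma ph_eq (N : ℕ) (z : Fin N → ℝ) (hinj : Function.Injective z)
    (hroot : ∀ i, (physHermite N).eval (z i) = 0) :
    ∃ c : ℝ, c ≠ 0 ∧ physHermite N = (∏ j, (X - C (z j))) * C c := by
  set P : Polynomial ℝ := ∏ j, (X - C (z j)) with hP
  have hPmonic : P.Monic := monic_prod_of_monic _ _ fun j _ => monic_X_sub_C _
  have hPdeg : P.natDegree = N := by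
    rw [hP, natDegree_prod_of_monic _ _ fun j _ => monic_X_sub_C _]
    simp
  -- multiset of z values ≤ roots
  have hM : (Multiset.map z Finset.univ.val) ≤ (physHermite N).roots := by
    rw [Multiset.le_iff_count]
    intro a
    by_cases ha : a ∈ Multiset.map z Finset.univ.val
    · have hnd : (Multiset.map z Finset.univ.val).Nodup :=
        (Finset.univ.nodup).map_on (fun x _ y _ h => hinj h)
      rw [Multiset.count_eq_one_of_mem hnd ha]
      rw [count_roots]
      rw [Nat.one_le_iff_ne_zero, ← Nat.pos_iff_ne_zero,
        rootMultiplicity_pos (ph_ne_zero N)]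
      obtain ⟨j, _, rfl⟩ := Multiset.mem_map.mp ha
      exact hroot j
    · rw [Multiset.count_eq_zero_of_notMem ha]; exact Nat.zero_le _
  have hdvd : P ∣ physHermite N := by
    have h1 : (Multiset.map (fun a => X - C a) (Multiset.map z Finset.univ.val)).prod ∣
        (Multiset.map (fun a => X - C a) (physHermite N).roots).prod :=
      Multiset.prod_dvd_prod_of_le (Multiset.map_le_map hM)
    refine dvd_trans ?_ (h1.trans (prod_multiset_X_sub_C_dvd _))
    rw [Multiset.map_map]
    exact dvd_of_eq rfl
  obtain ⟨q, hq⟩ := hdvd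
  have hq0 : q ≠ 0 := by
    intro h; rw [h, mul_zero] at hq; exact ph_ne_zero N hq
  have hqdeg : q.natDegree = 0 := by
    have := ph_natDegree N
    rw [hq, natDegree_mul (hPmonic.ne_zero) hq0, hPdeg] at this
    omega
  obtain ⟨c, rfl⟩ := natDegree_eq_zero.mp hqdeg
  refine ⟨c, ?_, hq⟩
  intro h; rw [h, map_zero] at hq0; exact hq0 rfl

lemma derivative_finset_prod {ι : Type*} [DecidableEq ι] (s : Finset ι) (f : ι → Polynomial ℝ) :
    derivative (∏ i ∈ s, f i) = ∑ i ∈ s, (∏ j ∈ s.erase i, f j) * derivative (f i) := by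
  induction s using Finset.induction_on with
  | empty => simp
  | insert a s ha ih =>
    calc derivative (∏ i ∈ insert a s, f i)
        = (∏ j ∈ s, f j) * derivative (f a)
            + f a * ∑ i ∈ s, (∏ j ∈ s.erase i, f j) * derivative (f i) := by
          rw [Finset.prod_insert ha, derivative_mul, ih]; ring
      _ = ∑ i ∈ insert a s, (∏ j ∈ (insert a s).erase i, f j) * derivative (f i) := by
          rw [Finset.sum_insert ha, Finset.erase_insert ha, Finset.mul_sum]
          congr 1
          refine Finset.sum_congr rfl fun i hi => ?_
          rw [Finset.erase_insert_of_ne (fun h : a = i => ha (h ▸ hi)),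
            Finset.prod_insert (fun h => ha (Finset.mem_of_mem_erase h))]
          ring

lemma key_identity (N : ℕ) (z : Fin N → ℝ) (hinj : Function.Injective z)
    (hroot : ∀ i, (physHermite N).eval (z i) = 0) (j : Fin N) :
    ∑ k ∈ Finset.univ.erase j, (z j - z k)⁻¹ = z j := by
  obtain ⟨c, hc, hH⟩ := ph_eq N z hinj hroot
  set Q : Polynomial ℝ := ∏ i ∈ Finset.univ.erase j, (X - C (z i)) with hQ
  have hsplit : (∏ i, (X - C (z i))) = (X - C (z j)) * Q :=
    (Finset.mul_prod_erase univ _ (mem_univ j)).symm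
  have hne : ∀ k ∈ Finset.univ.erase j, z j - z k ≠ 0 := fun k hk =>
    sub_ne_zero.mpr fun h => (Finset.mem_erase.mp hk).1 (hinj h).symm
  set u : ℝ := Q.eval (z j) with hu
  have hu0 : u ≠ 0 := by
    rw [hu, hQ, eval_prod]
    exact Finset.prod_ne_zero_iff.mpr fun k hk => by simpa using hne k hk
  have hQd : (derivative Q).eval (z j) = (∑ k ∈ Finset.univ.erase j, (z j - z k)⁻¹) * u := by
    rw [hQ, derivative_finset_prod, eval_finset_sum, Finset.sum_mul]
    refine Finset.sum_congr rfl fun k hk => ?_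
    simp only [derivative_sub, derivative_X, derivative_C, sub_zero, mul_one]
    have h2 : eval (z j) (((univ.erase j).erase k).prod fun i => X - C (z i)) * (z j - z k)
        = u := by
      rw [hu, hQ, ← Finset.prod_erase_mul _ _ hk]
      simp [eval_mul]
    field_simp [hne k hk] at h2 ⊢
    linarith [h2]
  have hode := congrArg (eval (z j)) (ph_ode N)
  rw [hH, hsplit] at hode
  simp only [derivative_mul, derivative_add, derivative_sub, derivative_X, derivative_C,
    sub_zero, mul_zero, zero_mul, add_zero, zero_add, mul_one, one_mul, eval_add, eval_mul,
    eval_sub, eval_X, eval_C, sub_self, eval_ofNat] at hode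
  have hQj : (derivative Q).eval (z j) = z j * u := by
    have h2 : (derivative Q).eval (z j) * (2 * c) = (z j * u) * (2 * c) := by
      rw [hu]; ring_nf; ring_nf at hode; linarith [hode]
    exact mul_right_cancel₀ (mul_ne_zero two_ne_zero hc) h2
  exact mul_right_cancel₀ hu0 (hQd.symm.trans hQj)

lemma sym_exists (N : ℕ) (z : Fin N → ℝ) (hinj : Function.Injective z)
    (hroot : ∀ i, (physHermite N).eval (z i) = 0) (j : Fin N) :
    ∃ i, z i = -z j := by
  obtain ⟨c, hc, hH⟩ := ph_eq N z hinj hroot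
  have h1 : (physHermite N).eval (-z j) = 0 := by
    rw [ph_parity, hroot j, mul_zero]
  rw [hH, eval_mul, eval_C, mul_eq_zero] at h1
  rcases h1 with h1 | h1
  · rw [eval_prod, Finset.prod_eq_zero_iff] at h1
    obtain ⟨i, _, hi⟩ := h1
    simp only [eval_sub, eval_X, eval_C, sub_eq_zero] at hi
    exact ⟨i, hi.symm⟩
  · exact absurd h1 hc

lemma odd_sum_zero (N : ℕ) (z : Fin N → ℝ) (hinj : Function.Injective z)
    (hsym : ∀ j, ∃ i, z i = -z j) (m : ℕ) (hm : Odd m) :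
    ∑ j, z j ^ m = 0 := by
  choose σ hσ using hsym
  have hσinj : Function.Injective σ := by
    intro a b h
    apply hinj
    have := hσ a
    rw [h, hσ b] at this
    linarith
  have hσbij : Function.Bijective σ := (Finite.injective_iff_bijective).mp hσinj
  have h1 : ∑ j, z j ^ m = ∑ j, z (σ j) ^ m :=
    (Fintype.sum_bijective σ hσbij _ _ fun j => rfl).symm
  have h2 : ∑ j, z (σ j) ^ m = -∑ j, z j ^ m := by
    rw [← Finset.sum_neg_distrib]
    refine Finset.sum_congr rfl fun j _ => ?_
    rw [hσ j, hm.neg_pow]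
  linarith [h1, h2]

-- swap lemma
lemma swap_sum {N : ℕ} (H : Fin N → Fin N → ℝ) :
    ∑ j, ∑ k ∈ Finset.univ.erase j, H j k = ∑ j, ∑ k ∈ Finset.univ.erase j, H k j := by
  have he : ∀ j : Fin N, Finset.univ.erase j = Finset.univ.filter (fun k => k ≠ j) := by
    intro j; ext k; simp [Finset.mem_erase, and_comm]
  simp only [he, Finset.sum_filter]
  rw [Finset.sum_comm]
  refine Finset.sum_congr rfl fun j _ => Finset.sum_congr rfl fun k _ => ?_
  exact if_congr ne_comm rfl rfl

theorem stmt_3 (N : ℕ) (z : Fin N → ℝ)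
    (hord : ∀ i j : Fin N, i < j → z j < z i)
    (hroot : ∀ i, (physHermite N).eval (z i) = 0)
    (s : ℕ → ℝ) (hs : ∀ l, s l = ∑ j, (z j) ^ l) :
    s 0 = N ∧
      ∀ l : ℕ, 1 ≤ l →
        s (2 * l) = (1 / 2) * ∑ m ∈ Finset.range l, s (2 * (l - 1 - m)) * s (2 * m)
          - ((2 * (l : ℝ) - 1) / 2) * s (2 * (l - 1)) := by
  have hinj : Function.Injective z := by
    intro a b h
    rcases lt_trichotomy a b with hab | hab | hab
    · exact absurd h.symm (ne_of_lt (hord a b hab))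
    · exact hab
    · exact absurd h (ne_of_lt (hord b a hab))
  constructor
  · rw [hs 0]; simp
  intro l hl
  have hne : ∀ j, ∀ k ∈ Finset.univ.erase j, z j - z k ≠ 0 := fun j k hk =>
    sub_ne_zero.mpr fun h => (Finset.mem_erase.mp hk).1 (hinj h).symm
  set p : ℕ → ℝ := fun m => ∑ j, z j ^ m with hp
  -- step 1 : p (2l) = T
  have step1 : p (2 * l) = ∑ j, ∑ k ∈ Finset.univ.erase j,
      z j ^ (2 * l - 1) * (z j - z k)⁻¹ := by
    refine Finset.sum_congr rfl fun j _ => ?_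
    rw [← Finset.mul_sum, key_identity N z hinj hroot j]
    rw [← pow_succ]
    congr 1
    omega
  -- step 2 : 2 * T = sum of differences
  have step2 : 2 * p (2 * l) = ∑ j, ∑ k ∈ Finset.univ.erase j,
      (z j ^ (2 * l - 1) - z k ^ (2 * l - 1)) * (z j - z k)⁻¹ := by
    rw [step1]
    have h2 := swap_sum (fun j k => z j ^ (2 * l - 1) * (z j - z k)⁻¹)
    rw [two_mul]
    nth_rewrite 2 [h2]
    rw [← Finset.sum_add_distrib]
    refine Finset.sum_congr rfl fun j _ => ?_
    rw [← Finset.sum_add_distrib]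
    refine Finset.sum_congr rfl fun k hk => ?_
    have h3 : z k - z j = -(z j - z k) := by ring
    rw [h3, inv_neg]
    ring
  -- step 3 : geometric sum expansion
  have step3 : ∀ j, ∀ k ∈ Finset.univ.erase j,
      (z j ^ (2 * l - 1) - z k ^ (2 * l - 1)) * (z j - z k)⁻¹ =
      ∑ m ∈ Finset.range (2 * l - 1), z j ^ m * z k ^ (2 * l - 2 - m) := by
    intro j k hk
    have hg := geom_sum₂_mul (z j) (z k) (2 * l - 1)
    rw [← hg, mul_inv_cancel_right₀ (hne j k hk)]
    exact Finset.sum_congr rfl fun m _ => by rw [show 2*l-1-1 = 2*l-2 by omega]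
  -- step 4
  have hmem : ∀ m ∈ Finset.range (2 * l - 1), m + (2 * l - 2 - m) = 2 * l - 2 := by
    intro m hm; rw [Finset.mem_range] at hm; omega
  have step4 : 2 * p (2 * l) = (∑ m ∈ Finset.range (2 * l - 1), p m * p (2 * l - 2 - m))
      - (2 * l - 1 : ℕ) * p (2 * l - 2) := by
    rw [step2, Finset.sum_congr rfl (fun j _ => Finset.sum_congr rfl (step3 j))]
    rw [show (∑ j, ∑ k ∈ Finset.univ.erase j, ∑ m ∈ Finset.range (2 * l - 1),
        z j ^ m * z k ^ (2 * l - 2 - m)) = ∑ m ∈ Finset.range (2 * l - 1),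
        ∑ j, ∑ k ∈ Finset.univ.erase j, z j ^ m * z k ^ (2 * l - 2 - m) by
      rw [Finset.sum_comm]
      exact Finset.sum_congr rfl fun j _ => Finset.sum_comm]
    have h6 : ∀ m ∈ Finset.range (2 * l - 1),
        (∑ j, ∑ k ∈ Finset.univ.erase j, z j ^ m * z k ^ (2 * l - 2 - m))
        = p m * p (2 * l - 2 - m) - p (2 * l - 2) := by
      intro m hm
      have h5 : ∀ j : Fin N, ∑ k ∈ Finset.univ.erase j, z j ^ m * z k ^ (2 * l - 2 - m)
          = z j ^ m * p (2 * l - 2 - m) - z j ^ (2 * l - 2) := by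
        intro j
        rw [← Finset.mul_sum, Finset.sum_erase_eq_sub (Finset.mem_univ j)]
        rw [mul_sub, ← pow_add, hmem m hm]
      rw [Finset.sum_congr rfl fun j _ => h5 j, Finset.sum_sub_distrib, ← Finset.sum_mul]
    rw [Finset.sum_congr rfl h6, Finset.sum_sub_distrib, Finset.sum_const,
      Finset.card_range, nsmul_eq_mul]

  -- symmetry and odd sums
  have hsym := sym_exists N z hinj hroot
  have hodd : ∀ m, Odd m → p m = 0 := fun m hm => odd_sum_zero N z hinj hsym m hm
  -- step 5: restrict to even indices
  have step5 : ∑ m ∈ Finset.range (2 * l - 1), p m * p (2 * l - 2 - m)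
      = ∑ t ∈ Finset.range l, p (2 * t) * p (2 * l - 2 - 2 * t) := by
    rw [← Finset.sum_filter_of_ne (p := fun m => Even m)
      (fun m hm h0 => by
        by_contra hev
        exact h0 (by rw [hodd m (Nat.not_even_iff_odd.mp hev), zero_mul]))]
    have himg : (Finset.range (2 * l - 1)).filter (fun m => Even m)
        = (Finset.range l).image (fun t => 2 * t) := by
      ext a
      simp only [Finset.mem_filter, Finset.mem_range, Finset.mem_image, Nat.even_iff]
      constructor
      · rintro ⟨h1, h2⟩; exact ⟨a / 2, by omega, by omega⟩
      · rintro ⟨t, ht, rfl⟩; omega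
    rw [himg, Finset.sum_image (fun a _ b _ h => by omega)]
  -- conclude
  rw [hs (2 * l), hs (2 * (l - 1))]
  have hcast : ((2 * l - 1 : ℕ) : ℝ) = 2 * (l : ℝ) - 1 := by
    push_cast [Nat.cast_sub (by omega : 1 ≤ 2 * l)]; ring
  have hsum : ∑ m ∈ Finset.range l, s (2 * (l - 1 - m)) * s (2 * m)
      = ∑ t ∈ Finset.range l, p (2 * t) * p (2 * l - 2 - 2 * t) := by
    refine Finset.sum_congr rfl fun m hm => ?_
    rw [Finset.mem_range] at hm
    rw [hs (2 * (l - 1 - m)), hs (2 * m),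
      show 2 * (l - 1 - m) = 2 * l - 2 - 2 * m by omega]
    exact mul_comm _ _
  rw [hsum, show 2 * (l - 1) = 2 * l - 2 by omega]
  have := step4
  rw [step5, hcast] at this
  show p (2 * l) = _ - _ * p (2 * l - 2)
  linarith [this]
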